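/- Let n ≥ 1 be an integer, let a, x, x' ∈ ℝ^n have all entries nonnegative, and let λ ∈ [0,1]. Let S := {j ∈ {1,…,n} : x_j < x'_j}. Assume Σ_{j=1}^n a_j x_j < 2, Σ_{k=1}^n a_k > 0, and Σ_{k∈S} a_k x'_k > 0. Then Σ_{j=1}^n a_j · ( x_j + λ/(Σ_{k=1}^n a_k) + (1−λ)·x'_j·[j ∈ S] / (Σ_{k∈S} a_k x'_k) ) ≤ 3, where [j ∈ S] equals 1 if j ∈ S and 0 otherwise. -/

import Mathlib

/-- Growth-rate bound for the primal–dual learning-augmented covering LP algorithm: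
if the arriving row `a` is satisfied to extent less than `2` by the current solution `x`,
then the total growth rate is at most `3`. Here `S = {j : x_j < x'_j}`. -/
theorem stmt8 (n : ℕ) (hn : 1 ≤ n) (a x x' : Fin n → ℝ)
    (ha : ∀ j, 0 ≤ a j) (hx : ∀ j, 0 ≤ x j) (hx' : ∀ j, 0 ≤ x' j)
    (lam : ℝ) (hlam0 : 0 ≤ lam) (hlam1 : lam ≤ 1)
    (hcov : ∑ j, a j * x j < 2)
    (hSig : 0 < ∑ k, a k)
    (hW : 0 < ∑ k ∈ Finset.univ.filter (fun k => x k < x' k), a k * x' k) :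
    ∑ j, a j * (x j + lam / (∑ k, a k) +
        (1 - lam) * x' j * (if x j < x' j then (1 : ℝ) else 0) /
          (∑ k ∈ Finset.univ.filter (fun k => x k < x' k), a k * x' k)) ≤ 3 := by
  set Sa := ∑ k, a k with hSa
  set W := ∑ k ∈ Finset.univ.filter (fun k => x k < x' k), a k * x' k with hWdef
  have h2 : ∑ j, a j * (lam / Sa) = lam := by
    rw [← Finset.sum_mul]
    field_simp
    rw [hSa]; ring
  have h3 : ∑ j, a j * ((1 - lam) * x' j * (if x j < x' j then (1:ℝ) else 0) / W)
      = 1 - lam := by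
    have heq : ∀ j ∈ Finset.univ, a j * ((1 - lam) * x' j * (if x j < x' j then (1:ℝ) else 0) / W)
        = if x j < x' j then (1 - lam) / W * (a j * x' j) else 0 := by
      intro j _
      split <;> simp <;> ring
    rw [Finset.sum_congr rfl heq, ← Finset.sum_filter, ← Finset.mul_sum, ← hWdef]
    field_simp
  have hsplit : ∑ j, a j * (x j + lam / Sa +
      (1 - lam) * x' j * (if x j < x' j then (1:ℝ) else 0) / W)
      = (∑ j, a j * x j) + (∑ j, a j * (lam / Sa)) +
        (∑ j, a j * ((1 - lam) * x' j * (if x j < x' j then (1:ℝ) else 0) / W)) := by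
    simp [mul_add, Finset.sum_add_distrib]
  rw [hsplit, h2, h3]
  linarith
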